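/- (Observation 1.) Fix a party A ∈ Δ, a subset 𝒳 ⊆ Δ \ {A}, and a strict partial order ξ₀ on {A} ∪ 𝒳. For an SPO κ on Γ, let Q(κ) denote the conjunction of: (i) for all X ∈ 𝒳, not A 𝒞_κ X; and (ii) the restriction of 𝒞_κ to {A} ∪ 𝒳 equals ξ₀. Then for any two SPOs κ and κ' on Γ that both satisfy the closed-laboratory structural conditions for every party, if the causal past of I_A and the causal elsewhere of I_A are the same sets for κ and κ', and κ and κ' agree as relations on 𝒫_{I_A} ∪ ℰ_{I_A}, then Q(κ) holds if and only if Q(κ') holds. -/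

import Mathlib

/-- The variables associated to the parties: for a party `X`, `(X,0)` is `X_I`, `(X,1)` is
`X_O`, `(X,2)` is the setting variable `I_X` and `(X,3)` is the outcome variable `O_X`. -/
abbrev PVar (Δ : Type*) := Δ × Fin 4

def XIv {Δ : Type*} (X : Δ) : PVar Δ := (X, 0)
def XOv {Δ : Type*} (X : Δ) : PVar Δ := (X, 1)
def IVv {Δ : Type*} (X : Δ) : PVar Δ := (X, 2)
def OVv {Δ : Type*} (X : Δ) : PVar Δ := (X, 3)

/-- The closed-laboratory structural conditions on a strict partial order on `Γ`. -/
def ClosedLabStruct {Δ : Type*} (κ : PVar Δ → PVar Δ → Prop) : Prop :=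
  ∀ (X : Δ) (Y : PVar Δ),
    (κ (IVv X) Y ↔ (Y = OVv X ∨ Y = XOv X ∨ κ (XOv X) Y)) ∧
    (κ Y (OVv X) ↔ (Y = IVv X ∨ Y = XIv X ∨ κ Y (XIv X)))

/-- The coarse-grained relation `𝒞_κ` on the parties: `X 𝒞_κ Y` iff there is a chain
`X_O ≺ Λ^{(1)}_I`, `Λ^{(j)}_O ≺ Λ^{(j+1)}_I`, …, `Λ^{(M)}_O ≺ Y_I` (with `M ≥ 0`). -/
def coarse {Δ : Type*} (κ : PVar Δ → PVar Δ → Prop) : Δ → Δ → Prop :=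
  Relation.TransGen (fun W V => κ (XOv W) (XIv V))

/-- `Y` belongs to the causal past or causal elsewhere of `I_A` (w.r.t. `κ`). -/
def inPE {Δ : Type*} (κ : PVar Δ → PVar Δ → Prop) (A : Δ) (Y : PVar Δ) : Prop :=
  κ Y (IVv A) ∨ (Y ≠ IVv A ∧ ¬ κ Y (IVv A) ∧ ¬ κ (IVv A) Y)

/-- The condition `Q(κ)`: (i) no element of `𝒳` lies in the coarse-grained causal future
of `A`, and (ii) the restriction of `𝒞_κ` to `{A} ∪ 𝒳` equals `ξ₀`. -/
def Qcond {Δ : Type*} (κ : PVar Δ → PVar Δ → Prop) (A : Δ) (𝒳 : Set Δ)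
    (ξ₀ : Δ → Δ → Prop) : Prop :=
  (∀ W ∈ 𝒳, ¬ coarse κ A W) ∧
  (∀ a ∈ insert A 𝒳, ∀ b ∈ insert A 𝒳, (coarse κ a b ↔ ξ₀ a b))

/-- Auxiliary: `σ I_A (X_I V)` implies `σ (A_O) (X_I V)` under the closed-lab conditions. -/
lemma futXI {Δ : Type*} (A : Δ) (σ : PVar Δ → PVar Δ → Prop) (hCL : ClosedLabStruct σ)
    (V : Δ) (h : σ (IVv A) (XIv V)) : σ (XOv A) (XIv V) := by
  rcases (hCL A (XIv V)).1.mp h with h | h | h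
  · simp [XIv, OVv, Prod.ext_iff] at h
  · simp [XIv, XOv, Prod.ext_iff] at h
  · exact h

/-- Auxiliary chain-transfer lemma: a coarse `τ`-chain from `a` to `b` either transfers
to a `σ`-chain from `a` to `b`, or yields a `σ`-chain from `A` to `b`. -/
lemma lemW {Δ : Type*} (A : Δ) (σ τ : PVar Δ → PVar Δ → Prop)
    (hσCL : ClosedLabStruct σ)
    (hτTrans : ∀ a b c, τ a b → τ b c → τ a c)
    (hFut : ∀ Y, σ (IVv A) Y ↔ τ (IVv A) Y)
    (hAg : ∀ Y Z, Y ≠ IVv A → Z ≠ IVv A → ¬ σ (IVv A) Y → ¬ σ (IVv A) Z →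
      (σ Y Z ↔ τ Y Z)) :
    ∀ a b, coarse τ a b → coarse σ a b ∨ coarse σ A b := by
  intro a b h
  induction h using Relation.TransGen.head_induction_on with
  | single h =>
    rename_i a'
    by_cases hb : σ (IVv A) (XIv b)
    · exact Or.inr (Relation.TransGen.single (futXI A σ hσCL b hb))
    · by_cases ha : σ (IVv A) (XOv a')
      · exact absurd ((hFut _).mpr (hτTrans _ _ _ ((hFut _).mp ha) h)) hb
      · exact Or.inl (Relation.TransGen.single ((hAg _ _
          (by simp [XOv, IVv, Prod.ext_iff]) (by simp [XIv, IVv, Prod.ext_iff]) ha hb).mpr h))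
  | head h' hcb ihc =>
    rename_i a' c
    rcases ihc with hσcb | hσAb
    · by_cases hc : σ (IVv A) (XIv c)
      · exact Or.inr (Relation.TransGen.head (futXI A σ hσCL c hc) hσcb)
      · by_cases ha : σ (IVv A) (XOv a')
        · exact absurd ((hFut _).mpr (hτTrans _ _ _ ((hFut _).mp ha) h')) hc
        · exact Or.inl (Relation.TransGen.head ((hAg _ _
            (by simp [XOv, IVv, Prod.ext_iff]) (by simp [XIv, IVv, Prod.ext_iff]) ha hc).mpr h') hσcb)
    · exact Or.inr hσAb

/-- Auxiliary one-directional version of Observation 1. -/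
lemma transferQ {Δ : Type*}
    (A : Δ) (𝒳 : Set Δ) (ξ₀ : Δ → Δ → Prop) (hξA : ¬ ξ₀ A A)
    (κ κ' : PVar Δ → PVar Δ → Prop)
    (hκIrrefl : ∀ a, ¬ κ a a) (hκTrans : ∀ a b c, κ a b → κ b c → κ a c)
    (hκ'Irrefl : ∀ a, ¬ κ' a a) (hκ'Trans : ∀ a b c, κ' a b → κ' b c → κ' a c)
    (hκCL : ClosedLabStruct κ) (hκ'CL : ClosedLabStruct κ')
    (hPast : ∀ Y, κ Y (IVv A) ↔ κ' Y (IVv A))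
    (hElse : ∀ Y, (Y ≠ IVv A ∧ ¬ κ Y (IVv A) ∧ ¬ κ (IVv A) Y) ↔
      (Y ≠ IVv A ∧ ¬ κ' Y (IVv A) ∧ ¬ κ' (IVv A) Y))
    (hAgree : ∀ Y Z, inPE κ A Y → inPE κ A Z → (κ Y Z ↔ κ' Y Z)) :
    Qcond κ A 𝒳 ξ₀ → Qcond κ' A 𝒳 ξ₀ := by
  intro hQ
  obtain ⟨hQ1, hQ2⟩ := hQ
  have hAS : A ∈ insert A 𝒳 := Set.mem_insert _ _
  -- the futures of I_A agree
  have hFut : ∀ Y, κ (IVv A) Y ↔ κ' (IVv A) Y := by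
    intro Y
    by_cases hYp : κ Y (IVv A)
    · have h1 : ¬ κ (IVv A) Y := fun h => hκIrrefl _ (hκTrans _ _ _ hYp h)
      have h2 : ¬ κ' (IVv A) Y := fun h => hκ'Irrefl _ (hκ'Trans _ _ _ ((hPast Y).mp hYp) h)
      simp [h1, h2]
    · by_cases hYe : Y = IVv A
      · subst hYe; simp [hκIrrefl, hκ'Irrefl]
      · have hYp' : ¬ κ' Y (IVv A) := fun h => hYp ((hPast Y).mpr h)
        have hE := hElse Y
        constructor
        · intro h
          by_contra h'
          exact (hE.mpr ⟨hYe, hYp', h'⟩).2.2 h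
        · intro h
          by_contra h'
          exact (hE.mp ⟨hYe, hYp, h'⟩).2.2 h
  -- agreement off the future of I_A
  have hAg1 : ∀ Y Z, Y ≠ IVv A → Z ≠ IVv A → ¬ κ (IVv A) Y → ¬ κ (IVv A) Z →
      (κ Y Z ↔ κ' Y Z) := by
    intro Y Z hY hZ hfY hfZ
    have pe : ∀ W, W ≠ IVv A → ¬ κ (IVv A) W → inPE κ A W := by
      intro W hW hfW
      by_cases hp : κ W (IVv A)
      · exact Or.inl hp
      · exact Or.inr ⟨hW, hp, hfW⟩
    exact hAgree Y Z (pe Y hY hfY) (pe Z hZ hfZ)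
  have hAg2 : ∀ Y Z, Y ≠ IVv A → Z ≠ IVv A → ¬ κ' (IVv A) Y → ¬ κ' (IVv A) Z →
      (κ' Y Z ↔ κ Y Z) := by
    intro Y Z hY hZ hfY hfZ
    exact (hAg1 Y Z hY hZ (fun h => hfY ((hFut Y).mp h)) (fun h => hfZ ((hFut Z).mp h))).symm
  -- chain transfers in both directions
  have hW1 := lemW A κ' κ hκ'CL hκTrans (fun Y => (hFut Y).symm) hAg2
  have hW2 := lemW A κ κ' hκCL hκ'Trans hFut hAg1
  -- no coarse κ-chain from A to any member of {A} ∪ 𝒳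
  have hP : ∀ b ∈ insert A 𝒳, ¬ coarse κ A b := by
    intro b hb
    rcases Set.mem_insert_iff.mp hb with h | hb𝒳
    · subst h
      exact fun hc => hξA ((hQ2 b hAS b hAS).mp hc)
    · exact hQ1 b hb𝒳
  have hP' : ∀ b ∈ insert A 𝒳, ¬ coarse κ' A b := by
    intro b hb h
    rcases hW2 A b h with h2 | h2 <;> exact hP b hb h2
  have hiff : ∀ a b, b ∈ insert A 𝒳 → (coarse κ a b ↔ coarse κ' a b) := by
    intro a b hb
    exact ⟨fun h => (hW1 a b h).resolve_right (hP' b hb),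
           fun h => (hW2 a b h).resolve_right (hP b hb)⟩
  refine ⟨fun W hW => hP' W (Set.mem_insert_of_mem _ hW), ?_⟩
  intro a ha b hb
  rw [← hiff a b hb]
  exact hQ2 a ha b hb

/-- Observation 1: fix a party `A`, a subset `𝒳 ⊆ Δ \ {A}`, and a strict
partial order `ξ₀` on `{A} ∪ 𝒳`. For two SPOs `κ, κ'` on `Γ` satisfying the
closed-laboratory structural conditions: if the causal past and the causal elsewhere of
`I_A` are the same sets for `κ` and `κ'`, and `κ` and `κ'` agree as relations on
`𝒫_{I_A} ∪ ℰ_{I_A}`, then `Q(κ)` holds iff `Q(κ')` holds. -/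
theorem observation1
    {Δ : Type*} [Fintype Δ]
    (A : Δ) (𝒳 : Set Δ) (hA𝒳 : A ∉ 𝒳)
    (ξ₀ : Δ → Δ → Prop)
    (hξ₀Irrefl : ∀ a ∈ insert A 𝒳, ¬ ξ₀ a a)
    (hξ₀Trans : ∀ a ∈ insert A 𝒳, ∀ b ∈ insert A 𝒳, ∀ c ∈ insert A 𝒳,
      ξ₀ a b → ξ₀ b c → ξ₀ a c)
    (κ κ' : PVar Δ → PVar Δ → Prop)
    (hκIrrefl : ∀ a, ¬ κ a a) (hκTrans : ∀ a b c, κ a b → κ b c → κ a c)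
    (hκ'Irrefl : ∀ a, ¬ κ' a a) (hκ'Trans : ∀ a b c, κ' a b → κ' b c → κ' a c)
    (hκCL : ClosedLabStruct κ) (hκ'CL : ClosedLabStruct κ')
    (hPast : ∀ Y, κ Y (IVv A) ↔ κ' Y (IVv A))
    (hElse : ∀ Y, (Y ≠ IVv A ∧ ¬ κ Y (IVv A) ∧ ¬ κ (IVv A) Y) ↔
      (Y ≠ IVv A ∧ ¬ κ' Y (IVv A) ∧ ¬ κ' (IVv A) Y))
    (hAgree : ∀ Y Z, inPE κ A Y → inPE κ A Z → (κ Y Z ↔ κ' Y Z)) :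
    Qcond κ A 𝒳 ξ₀ ↔ Qcond κ' A 𝒳 ξ₀ := by
  have hξA : ¬ ξ₀ A A := hξ₀Irrefl A (Set.mem_insert _ _)
  have hPE : ∀ Y, inPE κ A Y ↔ inPE κ' A Y := fun Y => or_congr (hPast Y) (hElse Y)
  have hAgree' : ∀ Y Z, inPE κ' A Y → inPE κ' A Z → (κ' Y Z ↔ κ Y Z) :=
    fun Y Z hY hZ => (hAgree Y Z ((hPE Y).mpr hY) ((hPE Z).mpr hZ)).symm
  exact ⟨transferQ A 𝒳 ξ₀ hξA κ κ' hκIrrefl hκTrans hκ'Irrefl hκ'Trans hκCL hκ'CL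
      hPast hElse hAgree,
    transferQ A 𝒳 ξ₀ hξA κ' κ hκ'Irrefl hκ'Trans hκIrrefl hκTrans hκ'CL hκCL
      (fun Y => (hPast Y).symm) (fun Y => (hElse Y).symm) hAgree'⟩
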